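/- Define polynomials m_{k,i} by: m_{0,−1} = −1, m_{0,0} = 1−z, m_{1,−1} = 0, m_{1,0} = z−3, m_{1,1} = 1−2z, and for k ≥ 2 the recurrences m_{k,−1} = 0, m_{k,i} = m_{k−1,i−1} + (i+1)m_{k−2,i} + (z−i−2)m_{k−2,i−1} − z m_{k−2,i−2} for 1 ≤ i ≤ k−1, m_{k,k} = m_{k−1,k−1} − z m_{k−2,k−2}, and m_{k,0} equals −2z+3 for k even, z−3 for k odd. Then for all k, the leading coefficient m_{k,k}(z) equals ℓ_{k,k}(z) = Σ_{n=0}^{⌊(k+2)/2⌋} (−1)^n binomial(k+2−n,n) z^n. -/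

import Mathlib

open Polynomial

noncomputable def Fpoly (k : ℕ) : Polynomial ℝ :=
  ∑ n ∈ Finset.range ((k + 2) / 2 + 1),
      C ((-1 : ℝ) ^ n * (Nat.choose (k + 2 - n) n : ℝ)) * X ^ n

lemma choose_zero_of_big {a n : ℕ} (h : (a + 2) / 2 < n) : Nat.choose (a + 2 - n) n = 0 := by
  apply Nat.choose_eq_zero_of_lt
  omega

lemma coeffF (k n : ℕ) : (Fpoly k).coeff n = (-1 : ℝ) ^ n * (Nat.choose (k + 2 - n) n : ℝ) := by
  unfold Fpoly
  rw [Polynomial.finset_sum_coeff]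
  simp only [Polynomial.coeff_C_mul, Polynomial.coeff_X_pow]
  rw [Finset.sum_eq_single n]
  · simp
  · intro b _ hb
    simp [Ne.symm hb]
  · intro hn
    rw [Finset.mem_range, not_lt] at hn
    rw [choose_zero_of_big (by omega)]
    simp

lemma pascal (k t : ℕ) :
    Nat.choose (k + 3 - t) (t + 1) = Nat.choose (k + 2 - t) (t + 1) + Nat.choose (k + 2 - t) t := by
  rcases le_or_gt t (k + 2) with h | h
  · have : k + 3 - t = (k + 2 - t) + 1 := by omega
    rw [this, Nat.choose_succ_succ', Nat.add_comm]
  · have h1 : k + 3 - t ≤ t := by omega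
    have h2 : k + 2 - t < t := by omega
    rw [Nat.choose_eq_zero_of_lt (by omega), Nat.choose_eq_zero_of_lt (by omega),
      Nat.choose_eq_zero_of_lt (by omega)]

lemma recF (k : ℕ) : Fpoly (k + 2) = Fpoly (k + 1) - X * Fpoly k := by
  ext n
  rw [Polynomial.coeff_sub]
  cases n with
  | zero =>
    simp [coeffF]
  | succ t =>
    rw [Polynomial.coeff_X_mul, coeffF, coeffF, coeffF]
    have h1 : k + 2 + 2 - (t + 1) = k + 3 - t := by omega
    have h2 : k + 1 + 2 - (t + 1) = k + 2 - t := by omega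
    rw [h1, h2, pascal k t]
    push_cast
    ring

theorem stmt_16 (m : ℕ → ℤ → Polynomial ℝ)
    (h0m : m 0 (-1) = -1)
    (h00 : m 0 0 = 1 - X)
    (h1m : m 1 (-1) = 0)
    (h10 : m 1 0 = X - 3)
    (h11 : m 1 1 = 1 - 2 * X)
    (hkm : ∀ k : ℕ, 2 ≤ k → m k (-1) = 0)
    (hk0 : ∀ k : ℕ, 2 ≤ k →
      m k 0 = if Even k then 3 - 2 * X else X - 3)
    (hki : ∀ k : ℕ, 2 ≤ k → ∀ i : ℤ, 1 ≤ i → i ≤ (k : ℤ) - 1 →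
      m k i = m (k - 1) (i - 1) + C ((i : ℝ) + 1) * m (k - 2) i
        + (X - C ((i : ℝ) + 2)) * m (k - 2) (i - 1) - X * m (k - 2) (i - 2))
    (hkk : ∀ k : ℕ, 2 ≤ k →
      m k (k : ℤ) = m (k - 1) ((k : ℤ) - 1) - X * m (k - 2) ((k : ℤ) - 2)) :
    ∀ k : ℕ, m k (k : ℤ) = ∑ n ∈ Finset.range ((k + 2) / 2 + 1),
      C ((-1 : ℝ) ^ n * (Nat.choose (k + 2 - n) n : ℝ)) * X ^ n := by
  have key : ∀ k : ℕ, m k (k : ℤ) = Fpoly k := by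
    intro k
    induction k using Nat.strong_induction_on with
    | _ k ih =>
      match k with
      | 0 =>
        rw [show ((0:ℕ):ℤ) = 0 by norm_num, h00]
        unfold Fpoly
        simp [Finset.sum_range_succ]
        ring
      | 1 =>
        rw [show ((1:ℕ):ℤ) = 1 by norm_num, h11]
        unfold Fpoly
        norm_num [Finset.sum_range_succ]
        ring
      | (k + 2) =>
        have h := hkk (k + 2) (by omega)
        have e1 : (k + 2 : ℕ) - 1 = k + 1 := by omega
        have e2 : (k + 2 : ℕ) - 2 = k := by omega
        have e3 : ((k + 2 : ℕ) : ℤ) - 1 = ((k + 1 : ℕ) : ℤ) := by push_cast; ring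
        have e4 : ((k + 2 : ℕ) : ℤ) - 2 = ((k : ℕ) : ℤ) := by push_cast; ring
        rw [e1, e2, e3, e4, ih (k + 1) (by omega), ih k (by omega)] at h
        rw [h, recF]
  intro k
  rw [key k]
  rfl
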